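/- Cocycle property of curvature-difference traces: for projections P⁰, P¹, P² pairwise differing by trace class, with invertible Toeplitz operators T₁ = (P⁰,P¹), T₂ = (P¹,P²), T = (P⁰,P²), and bounded R^i ∈ End(W^i) such that all relevant differences are trace class, tr_{W⁰}[T⁻¹ R² T − R⁰] = tr_{W⁰}[(T₂T₁)⁻¹ R² (T₂T₁) − R⁰], provided T − T₂T₁ is trace class and the difference of conjugations (T₂T₁)⁻¹R²(T₂T₁) − T⁻¹R²T is the trace of a commutator and hence traceless. -/

import Mathlib

set_option maxHeartbeats 1000000


open scoped ComplexConjugate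

namespace Pap

noncomputable section

variable {E F : Type*}
  [NormedAddCommGroup E] [InnerProductSpace ℂ E]
  [NormedAddCommGroup F] [InnerProductSpace ℂ F]

/-- Nuclear (= trace-class on Hilbert space) operator: it admits a decomposition
`A x = ∑ cₙ ⟪vₙ, x⟫ uₙ` with `∑ |cₙ| < ∞` and unit-norm vectors `uₙ, vₙ`. -/
def IsTraceClass (A : E →L[ℂ] F) : Prop :=
  ∃ (c : ℕ → ℂ) (u : ℕ → F) (v : ℕ → E),
    Summable (fun n => ‖c n‖) ∧ (∀ n, ‖u n‖ ≤ 1) ∧ (∀ n, ‖v n‖ ≤ 1) ∧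
    ∀ x, A x = ∑' n, c n • ((inner ℂ (v n) x : ℂ) • u n)

/-- Trace norm: the infimum of `∑ |cₙ|` over all such decompositions. -/
def traceNorm (A : E →L[ℂ] F) : ℝ :=
  sInf { t : ℝ | ∃ (c : ℕ → ℂ) (u : ℕ → F) (v : ℕ → E),
    Summable (fun n => ‖c n‖) ∧ (∀ n, ‖u n‖ ≤ 1) ∧ (∀ n, ‖v n‖ ≤ 1) ∧
    (∀ x, A x = ∑' n, c n • ((inner ℂ (v n) x : ℂ) • u n)) ∧ t = ∑' n, ‖c n‖ }

open Classical in
/-- The trace, computed from a chosen nuclear decomposition. -/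
def trace (A : E →L[ℂ] E) : ℂ :=
  if h : IsTraceClass A then
    ∑' n, h.choose n *
      (inner ℂ (h.choose_spec.choose_spec.choose n) (h.choose_spec.choose n) : ℂ)
  else 0

end

end Pap

namespace Pap

/-- The generalized Toeplitz operator `(P,Q) = Q∘P : range P → range Q`. -/
noncomputable def toeplitz {H : Type*} [NormedAddCommGroup H] [InnerProductSpace ℂ H]
    (P Q : H →L[ℂ] H) : (LinearMap.range (P : H →ₗ[ℂ] H)) →L[ℂ] (LinearMap.range (Q : H →ₗ[ℂ] H)) :=
  (Q.comp (Submodule.subtypeL (LinearMap.range (P : H →ₗ[ℂ] H)))).codRestrict (LinearMap.range (Q : H →ₗ[ℂ] H))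
    (fun _ => LinearMap.mem_range_self (Q : H →ₗ[ℂ] H) _)

end Pap

namespace Pap

section Helpers

variable {E F G : Type*}
  [NormedAddCommGroup E] [InnerProductSpace ℂ E]
  [NormedAddCommGroup F] [InnerProductSpace ℂ F]
  [NormedAddCommGroup G] [InnerProductSpace ℂ G]

lemma decomp_term_summable [CompleteSpace F] {c : ℕ → ℂ} {u : ℕ → F} {v : ℕ → E}
    (hc : Summable fun n => ‖c n‖) (hu : ∀ n, ‖u n‖ ≤ 1) (hv : ∀ n, ‖v n‖ ≤ 1) (x : E) :
    Summable fun n => c n • ((inner ℂ (v n) x : ℂ) • u n) := by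
  apply Summable.of_norm
  apply Summable.of_nonneg_of_le (fun n => norm_nonneg _) _ (hc.mul_right ‖x‖)
  intro n
  have h1 : ‖(inner ℂ (v n) x : ℂ)‖ ≤ ‖x‖ := by
    calc ‖(inner ℂ (v n) x : ℂ)‖ ≤ ‖v n‖ * ‖x‖ := norm_inner_le_norm _ _
    _ ≤ 1 * ‖x‖ := by
        apply mul_le_mul_of_nonneg_right (hv n) (norm_nonneg _)
    _ = ‖x‖ := one_mul _
  calc ‖c n • ((inner ℂ (v n) x : ℂ) • u n)‖
      = ‖c n‖ * (‖(inner ℂ (v n) x : ℂ)‖ * ‖u n‖) := by simp [norm_smul]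
    _ ≤ ‖c n‖ * (‖x‖ * 1) := by
        apply mul_le_mul_of_nonneg_left _ (norm_nonneg _)
        exact mul_le_mul h1 (hu n) (norm_nonneg _) (norm_nonneg _)
    _ = ‖c n‖ * ‖x‖ := by ring

lemma decomp_trace_summable {c : ℕ → ℂ} {u v : ℕ → E}
    (hc : Summable fun n => ‖c n‖) (hu : ∀ n, ‖u n‖ ≤ 1) (hv : ∀ n, ‖v n‖ ≤ 1) :
    Summable fun n => c n * (inner ℂ (v n) (u n) : ℂ) := by
  apply Summable.of_norm
  apply Summable.of_nonneg_of_le (fun n => norm_nonneg _) _ hc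
  intro n
  calc ‖c n * (inner ℂ (v n) (u n) : ℂ)‖ = ‖c n‖ * ‖(inner ℂ (v n) (u n) : ℂ)‖ := norm_mul _ _
    _ ≤ ‖c n‖ * (‖v n‖ * ‖u n‖) :=
        mul_le_mul_of_nonneg_left (norm_inner_le_norm _ _) (norm_nonneg _)
    _ ≤ ‖c n‖ * 1 := by
        apply mul_le_mul_of_nonneg_left _ (norm_nonneg _)
        exact mul_le_one₀ (hv n) (norm_nonneg _) (hu n)
    _ = ‖c n‖ := mul_one _

lemma tsum_inner_basis {ι : Type*} [CompleteSpace E] (b : HilbertBasis ι ℂ E)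
    {A : E →L[ℂ] E} {c : ℕ → ℂ} {u v : ℕ → E}
    (hc : Summable fun n => ‖c n‖) (hu : ∀ n, ‖u n‖ ≤ 1) (hv : ∀ n, ‖v n‖ ≤ 1)
    (hA : ∀ x, A x = ∑' n, c n • ((inner ℂ (v n) x : ℂ) • u n)) :
    ∑' i, (inner ℂ (b i) (A (b i)) : ℂ) = ∑' n, c n * (inner ℂ (v n) (u n) : ℂ) := by
  set f : ℕ → ι → ℂ := fun n i =>
    c n * ((inner ℂ (v n) (b i) : ℂ) * (inner ℂ (b i) (u n) : ℂ)) with hf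
  set g : ℕ × ι → ℝ := fun p =>
    ‖c p.1‖ * ((‖(inner ℂ (b p.2) (v p.1) : ℂ)‖ ^ 2 + ‖(inner ℂ (b p.2) (u p.1) : ℂ)‖ ^ 2) / 2)
    with hg
  have hgsumm_i : ∀ n, Summable fun i => g (n, i) := by
    intro n
    simp only [hg]
    exact (((b.orthonormal.inner_products_summable (x := v n)).add
      (b.orthonormal.inner_products_summable (x := u n))).div_const 2).mul_left _
  have hbessel : ∀ x : E, ‖x‖ ≤ 1 → ∑' i, ‖(inner ℂ (b i) x : ℂ)‖ ^ 2 ≤ 1 := by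
    intro x hx
    calc ∑' i, ‖(inner ℂ (b i) x : ℂ)‖ ^ 2 ≤ ‖x‖ ^ 2 := b.orthonormal.tsum_inner_products_le x
    _ ≤ 1 := by nlinarith [norm_nonneg x]
  have hgsum : Summable g := by
    rw [summable_prod_of_nonneg]
    · constructor
      · exact hgsumm_i
      · apply Summable.of_nonneg_of_le _ _ hc
        · intro n
          exact tsum_nonneg fun i => by positivity
        · intro n
          have : ∑' i, g (n, i) = ‖c n‖ *
              ((∑' i, ‖(inner ℂ (b i) (v n) : ℂ)‖ ^ 2) + ∑' i, ‖(inner ℂ (b i) (u n) : ℂ)‖ ^ 2) / 2 := by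
            rw [hg]
            simp only []
            rw [tsum_mul_left, tsum_div_const, Summable.tsum_add
              (b.orthonormal.inner_products_summable (x := v n))
              (b.orthonormal.inner_products_summable (x := u n))]
            ring
          rw [this]
          have h1 := hbessel (v n) (hv n)
          have h2 := hbessel (u n) (hu n)
          have hcn := norm_nonneg (c n)
          nlinarith
    · intro p
      positivity
  have hfle : ∀ p : ℕ × ι, ‖Function.uncurry f p‖ ≤ g p := by
    rintro ⟨n, i⟩
    have h1 : ‖(inner ℂ (v n) (b i) : ℂ)‖ = ‖(inner ℂ (b i) (v n) : ℂ)‖ := norm_inner_symm _ _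
    have h2 : ‖(inner ℂ (b i) (v n) : ℂ)‖ * ‖(inner ℂ (b i) (u n) : ℂ)‖ ≤
        (‖(inner ℂ (b i) (v n) : ℂ)‖ ^ 2 + ‖(inner ℂ (b i) (u n) : ℂ)‖ ^ 2) / 2 := by
      nlinarith [sq_nonneg (‖(inner ℂ (b i) (v n) : ℂ)‖ - ‖(inner ℂ (b i) (u n) : ℂ)‖)]
    calc ‖Function.uncurry f (n, i)‖
        = ‖c n‖ * (‖(inner ℂ (v n) (b i) : ℂ)‖ * ‖(inner ℂ (b i) (u n) : ℂ)‖) := by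
          simp [Function.uncurry, hf, norm_mul]
      _ ≤ g (n, i) := by
          rw [h1, hg]
          exact mul_le_mul_of_nonneg_left h2 (norm_nonneg _)
  have hfsumm : Summable (Function.uncurry f) :=
    Summable.of_norm (hgsum.of_nonneg_of_le (fun _ => norm_nonneg _) hfle)
  have key1 : ∀ i, (inner ℂ (b i) (A (b i)) : ℂ) = ∑' n, f n i := by
    intro i
    rw [hA (b i)]
    have hsumm := decomp_term_summable hc hu hv (b i)
    have hmap := (innerSL ℂ (b i)).map_tsum hsumm
    simp only [innerSL_apply_apply] at hmap
    rw [hmap]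
    congr 1
    funext n
    simp only [hf, inner_smul_right]
  have key2 : ∀ n, ∑' i, f n i = c n * (inner ℂ (v n) (u n) : ℂ) := by
    intro n
    rw [hf]
    simp only []
    rw [tsum_mul_left, b.tsum_inner_mul_inner]
  calc ∑' i, (inner ℂ (b i) (A (b i)) : ℂ) = ∑' i, ∑' n, f n i := by
        congr 1; funext i; exact key1 i
    _ = ∑' n, ∑' i, f n i := Summable.tsum_comm hfsumm
    _ = ∑' n, c n * (inner ℂ (v n) (u n) : ℂ) := by
        congr 1; funext n; exact key2 n

lemma trace_eq_decomp [CompleteSpace E] {A : E →L[ℂ] E} {c : ℕ → ℂ} {u v : ℕ → E}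
    (hc : Summable fun n => ‖c n‖) (hu : ∀ n, ‖u n‖ ≤ 1) (hv : ∀ n, ‖v n‖ ≤ 1)
    (hA : ∀ x, A x = ∑' n, c n • ((inner ℂ (v n) x : ℂ) • u n)) :
    trace A = ∑' n, c n * (inner ℂ (v n) (u n) : ℂ) := by
  have h : IsTraceClass A := ⟨c, u, v, hc, hu, hv, hA⟩
  obtain ⟨w, b, hb⟩ := exists_hilbertBasis (𝕜 := ℂ) (E := E)
  unfold trace
  rw [dif_pos h]
  obtain ⟨hc', hu', hv', hA'⟩ := h.choose_spec.choose_spec.choose_spec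
  calc ∑' n, h.choose n * (inner ℂ (h.choose_spec.choose_spec.choose n)
        (h.choose_spec.choose n) : ℂ)
      = ∑' i, (inner ℂ (b i) (A (b i)) : ℂ) := (tsum_inner_basis b hc' hu' hv' hA').symm
    _ = ∑' n, c n * (inner ℂ (v n) (u n) : ℂ) := tsum_inner_basis b hc hu hv hA


lemma even_odd_aux (k : ℕ) : Even (2 * k) ∧ ¬ Even (2 * k + 1) ∧
    (2 * k) / 2 = k ∧ (2 * k + 1) / 2 = k := by
  refine ⟨⟨k, two_mul k⟩, ?_, by omega, by omega⟩
  rintro ⟨r, hr⟩; omega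

lemma IsTraceClass.add_trace [CompleteSpace E] {A B : E →L[ℂ] E}
    (hA : IsTraceClass A) (hB : IsTraceClass B) :
    IsTraceClass (A + B) ∧ trace (A + B) = trace A + trace B := by
  obtain ⟨c, u, v, hc, hu, hv, hAx⟩ := hA
  obtain ⟨d, w, z, hd, hw, hz, hBx⟩ := hB
  set c' : ℕ → ℂ := fun n => if Even n then c (n / 2) else d (n / 2) with hc'
  set u' : ℕ → E := fun n => if Even n then u (n / 2) else w (n / 2) with hu'
  set v' : ℕ → E := fun n => if Even n then v (n / 2) else z (n / 2) with hv'
  have hce : ∀ k, c' (2 * k) = c k := fun k => by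
    simp only [hc']; rw [if_pos (even_odd_aux k).1, (even_odd_aux k).2.2.1]
  have hco : ∀ k, c' (2 * k + 1) = d k := fun k => by
    simp only [hc']; rw [if_neg (even_odd_aux k).2.1, (even_odd_aux k).2.2.2]
  have hue : ∀ k, u' (2 * k) = u k := fun k => by
    simp only [hu']; rw [if_pos (even_odd_aux k).1, (even_odd_aux k).2.2.1]
  have huo : ∀ k, u' (2 * k + 1) = w k := fun k => by
    simp only [hu']; rw [if_neg (even_odd_aux k).2.1, (even_odd_aux k).2.2.2]
  have hve : ∀ k, v' (2 * k) = v k := fun k => by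
    simp only [hv']; rw [if_pos (even_odd_aux k).1, (even_odd_aux k).2.2.1]
  have hvo : ∀ k, v' (2 * k + 1) = z k := fun k => by
    simp only [hv']; rw [if_neg (even_odd_aux k).2.1, (even_odd_aux k).2.2.2]
  have hcsum : Summable fun n => ‖c' n‖ :=
    Summable.even_add_odd (by simp only [hce]; exact hc) (by simp only [hco]; exact hd)
  have hub : ∀ n, ‖u' n‖ ≤ 1 := by
    intro n
    by_cases h : Even n
    · simp only [hu', if_pos h]; exact hu _
    · simp only [hu', if_neg h]; exact hw _
  have hvb : ∀ n, ‖v' n‖ ≤ 1 := by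
    intro n
    by_cases h : Even n
    · simp only [hv', if_pos h]; exact hv _
    · simp only [hv', if_neg h]; exact hz _
  have hABx : ∀ x, (A + B) x = ∑' n, c' n • ((inner ℂ (v' n) x : ℂ) • u' n) := by
    intro x
    have ha : HasSum (fun n => c n • ((inner ℂ (v n) x : ℂ) • u n)) (A x) := by
      rw [hAx x]; exact (decomp_term_summable hc hu hv x).hasSum
    have hb : HasSum (fun n => d n • ((inner ℂ (z n) x : ℂ) • w n)) (B x) := by
      rw [hBx x]; exact (decomp_term_summable hd hw hz x).hasSum
    have hsum : HasSum (fun n => c' n • ((inner ℂ (v' n) x : ℂ) • u' n)) (A x + B x) := by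
      apply HasSum.even_add_odd
      · simp only [hce, hve, hue]; exact ha
      · simp only [hco, hvo, huo]; exact hb
    rw [ContinuousLinearMap.add_apply, ← hsum.tsum_eq]
  constructor
  · exact ⟨c', u', v', hcsum, hub, hvb, hABx⟩
  · rw [trace_eq_decomp hcsum hub hvb hABx, trace_eq_decomp hc hu hv hAx,
      trace_eq_decomp hd hw hz hBx]
    have h1 : HasSum (fun n => c' n * (inner ℂ (v' n) (u' n) : ℂ))
        ((∑' n, c n * (inner ℂ (v n) (u n) : ℂ)) + ∑' n, d n * (inner ℂ (z n) (w n) : ℂ)) := by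
      apply HasSum.even_add_odd
      · simp only [hce, hve, hue]; exact (decomp_trace_summable hc hu hv).hasSum
      · simp only [hco, hvo, huo]; exact (decomp_trace_summable hd hw hz).hasSum
    exact h1.tsum_eq

lemma IsTraceClass.neg_trace [CompleteSpace E] {A : E →L[ℂ] E} (hA : IsTraceClass A) :
    IsTraceClass (-A) ∧ trace (-A) = -trace A := by
  obtain ⟨c, u, v, hc, hu, hv, hAx⟩ := hA
  have hcn : Summable fun n => ‖(-c n : ℂ)‖ := by simpa using hc
  have hAx' : ∀ x, (-A) x = ∑' n, (-c n) • ((inner ℂ (v n) x : ℂ) • u n) := by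
    intro x
    rw [ContinuousLinearMap.neg_apply, hAx x, ← tsum_neg]
    congr 1; funext n; rw [neg_smul]
  constructor
  · exact ⟨fun n => -c n, u, v, hcn, hu, hv, hAx'⟩
  · rw [trace_eq_decomp hcn hu hv hAx', trace_eq_decomp hc hu hv hAx, ← tsum_neg]
    congr 1; funext n; ring

lemma IsTraceClass.sub_trace [CompleteSpace E] {A B : E →L[ℂ] E}
    (hA : IsTraceClass A) (hB : IsTraceClass B) :
    IsTraceClass (A - B) ∧ trace (A - B) = trace A - trace B := by
  have hnB := hB.neg_trace
  have h := hA.add_trace hnB.1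
  have hAB : A + -B = A - B := by abel
  rw [hAB] at h
  refine ⟨h.1, ?_⟩
  rw [h.2, hnB.2]; ring

lemma trace_comp_comm [CompleteSpace E] [CompleteSpace F]
    (Y : F →L[ℂ] E) {X : E →L[ℂ] F} (hX : IsTraceClass X) :
    IsTraceClass (Y.comp X) ∧ IsTraceClass (X.comp Y) ∧
      trace (Y.comp X) = trace (X.comp Y) := by
  obtain ⟨c, u, v, hc, hu, hv, hXx⟩ := hX
  -- Y ∘ X
  set c₁ : ℕ → ℂ := fun n => c n * (‖Y (u n)‖ : ℂ) with hc₁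
  set u₁ : ℕ → E := fun n => ((‖Y (u n)‖⁻¹ : ℝ) : ℂ) • Y (u n) with hu₁
  have hc₁s : Summable fun n => ‖c₁ n‖ := by
    apply Summable.of_nonneg_of_le (fun n => norm_nonneg _) _ (hc.mul_right ‖Y‖)
    intro n
    simp only [hc₁, norm_mul, Complex.norm_real, Real.norm_eq_abs, abs_norm]
    apply mul_le_mul_of_nonneg_left _ (norm_nonneg _)
    calc ‖Y (u n)‖ ≤ ‖Y‖ * ‖u n‖ := Y.le_opNorm _
      _ ≤ ‖Y‖ * 1 := mul_le_mul_of_nonneg_left (hu n) (norm_nonneg _)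
      _ = ‖Y‖ := mul_one _
  have hu₁b : ∀ n, ‖u₁ n‖ ≤ 1 := by
    intro n
    by_cases h : Y (u n) = 0
    · simp [hu₁, h]
    · simp only [hu₁, norm_smul, Complex.norm_real, Real.norm_eq_abs, abs_inv, abs_norm]
      rw [inv_mul_cancel₀ (norm_ne_zero_iff.mpr h)]
  have hkey : ∀ n (t : ℂ), c₁ n • (t • u₁ n) = c n • (t • Y (u n)) := by
    intro n t
    by_cases h : Y (u n) = 0
    · simp [hc₁, hu₁, h]
    · simp only [hc₁, hu₁, smul_smul]
      congr 1
      have : ((‖Y (u n)‖ : ℂ)) * ((‖Y (u n)‖⁻¹ : ℝ) : ℂ) = 1 := by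
        rw [← Complex.ofReal_mul, mul_inv_cancel₀ (norm_ne_zero_iff.mpr h)]
        simp
      calc c n * (‖Y (u n)‖ : ℂ) * (t * ((‖Y (u n)‖⁻¹ : ℝ) : ℂ))
          = c n * t * ((‖Y (u n)‖ : ℂ) * ((‖Y (u n)‖⁻¹ : ℝ) : ℂ)) := by ring
        _ = c n * t := by rw [this, mul_one]
  have hYX : ∀ x, (Y.comp X) x = ∑' n, c₁ n • ((inner ℂ (v n) x : ℂ) • u₁ n) := by
    intro x
    rw [ContinuousLinearMap.comp_apply, hXx x,
      Y.map_tsum (decomp_term_summable hc hu hv x)]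
    congr 1; funext n
    rw [hkey n _]
    simp
  have htc₁ : IsTraceClass (Y.comp X) := ⟨c₁, u₁, v, hc₁s, hu₁b, hv, hYX⟩
  -- X ∘ Y
  set Ya := ContinuousLinearMap.adjoint Y with hYa
  set c₂ : ℕ → ℂ := fun n => c n * (‖Ya (v n)‖ : ℂ) with hc₂
  set v₁ : ℕ → F := fun n => ((‖Ya (v n)‖⁻¹ : ℝ) : ℂ) • Ya (v n) with hv₁
  have hc₂s : Summable fun n => ‖c₂ n‖ := by
    apply Summable.of_nonneg_of_le (fun n => norm_nonneg _) _ (hc.mul_right ‖Ya‖)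
    intro n
    simp only [hc₂, norm_mul, Complex.norm_real, Real.norm_eq_abs, abs_norm]
    apply mul_le_mul_of_nonneg_left _ (norm_nonneg _)
    calc ‖Ya (v n)‖ ≤ ‖Ya‖ * ‖v n‖ := Ya.le_opNorm _
      _ ≤ ‖Ya‖ * 1 := mul_le_mul_of_nonneg_left (hv n) (norm_nonneg _)
      _ = ‖Ya‖ := mul_one _
  have hv₁b : ∀ n, ‖v₁ n‖ ≤ 1 := by
    intro n
    by_cases h : Ya (v n) = 0
    · simp [hv₁, h]
    · simp only [hv₁, norm_smul, Complex.norm_real, Real.norm_eq_abs, abs_inv, abs_norm]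
      rw [inv_mul_cancel₀ (norm_ne_zero_iff.mpr h)]
  have hinner : ∀ n (y : F), (inner ℂ (v₁ n) y : ℂ) =
      ((‖Ya (v n)‖⁻¹ : ℝ) : ℂ) * (inner ℂ (Ya (v n)) y : ℂ) := by
    intro n y
    rw [hv₁]
    simp only [inner_smul_left, map_inv₀, Complex.conj_ofReal]
  have hkey₂ : ∀ n (y : F), c₂ n • ((inner ℂ (v₁ n) y : ℂ) • u n) =
      c n • ((inner ℂ (Ya (v n)) y : ℂ) • u n) := by
    intro n y
    by_cases h : Ya (v n) = 0
    · simp [hc₂, hinner, h]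
    · rw [hinner, hc₂]
      simp only [smul_smul]
      congr 1
      have : ((‖Ya (v n)‖ : ℂ)) * ((‖Ya (v n)‖⁻¹ : ℝ) : ℂ) = 1 := by
        rw [← Complex.ofReal_mul, mul_inv_cancel₀ (norm_ne_zero_iff.mpr h)]
        simp
      calc c n * (‖Ya (v n)‖ : ℂ) * (((‖Ya (v n)‖⁻¹ : ℝ) : ℂ) * (inner ℂ (Ya (v n)) y : ℂ))
          = c n * (inner ℂ (Ya (v n)) y : ℂ) * ((‖Ya (v n)‖ : ℂ) * ((‖Ya (v n)‖⁻¹ : ℝ) : ℂ)) := by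
            ring
        _ = c n * (inner ℂ (Ya (v n)) y : ℂ) := by rw [this, mul_one]
  have hXY : ∀ y, (X.comp Y) y = ∑' n, c₂ n • ((inner ℂ (v₁ n) y : ℂ) • u n) := by
    intro y
    rw [ContinuousLinearMap.comp_apply, hXx (Y y)]
    congr 1; funext n
    rw [hkey₂ n y, ContinuousLinearMap.adjoint_inner_left]
  have htc₂ : IsTraceClass (X.comp Y) := ⟨c₂, u, v₁, hc₂s, hu, hv₁b, hXY⟩
  refine ⟨htc₁, htc₂, ?_⟩
  rw [trace_eq_decomp hc₁s hu₁b hv hYX, trace_eq_decomp hc₂s hu hv₁b hXY]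
  have hL : ∀ n, c₁ n * (inner ℂ (v n) (u₁ n) : ℂ) = c n * (inner ℂ (v n) (Y (u n)) : ℂ) := by
    intro n
    by_cases h : Y (u n) = 0
    · simp [hc₁, hu₁, h]
    · have hne : ((‖Y (u n)‖ : ℂ)) * ((‖Y (u n)‖⁻¹ : ℝ) : ℂ) = 1 := by
        rw [← Complex.ofReal_mul, mul_inv_cancel₀ (norm_ne_zero_iff.mpr h)]
        simp
      rw [hu₁, hc₁]
      simp only [inner_smul_right]
      calc c n * (‖Y (u n)‖ : ℂ) * (((‖Y (u n)‖⁻¹ : ℝ) : ℂ) * (inner ℂ (v n) (Y (u n)) : ℂ))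
          = c n * (inner ℂ (v n) (Y (u n)) : ℂ) *
              ((‖Y (u n)‖ : ℂ) * ((‖Y (u n)‖⁻¹ : ℝ) : ℂ)) := by ring
        _ = c n * (inner ℂ (v n) (Y (u n)) : ℂ) := by rw [hne, mul_one]
  have hR : ∀ n, c₂ n * (inner ℂ (v₁ n) (u n) : ℂ) = c n * (inner ℂ (v n) (Y (u n)) : ℂ) := by
    intro n
    rw [← ContinuousLinearMap.adjoint_inner_left Y (u n) (v n)]
    by_cases h : Ya (v n) = 0
    · rw [← hYa]
      simp [hc₂, hv₁, h]
    · have hne : ((‖Ya (v n)‖ : ℂ)) * ((‖Ya (v n)‖⁻¹ : ℝ) : ℂ) = 1 := by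
        rw [← Complex.ofReal_mul, mul_inv_cancel₀ (norm_ne_zero_iff.mpr h)]
        simp
      rw [hinner n (u n), hc₂]
      calc c n * (‖Ya (v n)‖ : ℂ) * (((‖Ya (v n)‖⁻¹ : ℝ) : ℂ) * (inner ℂ (Ya (v n)) (u n) : ℂ))
          = c n * (inner ℂ (Ya (v n)) (u n) : ℂ) *
              ((‖Ya (v n)‖ : ℂ) * ((‖Ya (v n)‖⁻¹ : ℝ) : ℂ)) := by ring
        _ = c n * (inner ℂ ((ContinuousLinearMap.adjoint Y) (v n)) (u n) : ℂ) := by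
            rw [hne, mul_one, hYa]
  calc ∑' n, c₁ n * (inner ℂ (v n) (u₁ n) : ℂ)
      = ∑' n, c n * (inner ℂ (v n) (Y (u n)) : ℂ) := by congr 1; funext n; exact hL n
    _ = ∑' n, c₂ n * (inner ℂ (v₁ n) (u n) : ℂ) := by
        congr 1; funext n; exact (hR n).symm


lemma completeSpace_range {H : Type*} [NormedAddCommGroup H] [InnerProductSpace ℂ H]
    [CompleteSpace H] (P : H →L[ℂ] H) (hP : P.comp P = P) :
    CompleteSpace (LinearMap.range (P : H →ₗ[ℂ] H)) := by
  have hclosed : IsClosed ((LinearMap.range (P : H →ₗ[ℂ] H) : Submodule ℂ H) : Set H) := by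
    have : ((LinearMap.range (P : H →ₗ[ℂ] H) : Submodule ℂ H) : Set H) = {x | P x = x} := by
      ext x
      constructor
      · rintro ⟨y, rfl⟩
        have := DFunLike.congr_fun hP y
        simpa using this
      · intro hx
        exact ⟨x, hx⟩
    rw [this]
    exact isClosed_eq P.continuous continuous_id
  exact hclosed.completeSpace_coe


lemma IsTraceClass.neg' {A : E →L[ℂ] F} (hA : IsTraceClass A) : IsTraceClass (-A) := by
  obtain ⟨c, u, v, hc, hu, hv, hAx⟩ := hA
  refine ⟨fun n => -c n, u, v, by simpa using hc, hu, hv, ?_⟩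
  intro x
  rw [ContinuousLinearMap.neg_apply, hAx x, ← tsum_neg]
  congr 1; funext n; rw [neg_smul]

end Helpers

end Pap


/-- Cocycle property of curvature-difference traces. For orthogonal projections
`P⁰, P¹, P²` pairwise differing by trace class, invertible Toeplitz operators
`T₁ = (P⁰,P¹)`, `T₂ = (P¹,P²)`, `T = (P⁰,P²)` (inverses `T₁', T₂', T'`), and bounded
`R⁰ ∈ End(W⁰)`, `R² ∈ End(W²)` with the relevant differences trace class, one has
`tr_{W⁰}[T⁻¹R²T − R⁰] = tr_{W⁰}[(T₂T₁)⁻¹R²(T₂T₁) − R⁰]`, provided `T − T₂T₁` and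
`T⁻¹ − (T₂T₁)⁻¹` are trace class. -/
theorem trace_curvature_difference_cocycle
    {H : Type*} [NormedAddCommGroup H] [InnerProductSpace ℂ H] [CompleteSpace H]
    [TopologicalSpace.SeparableSpace H]
    (P₀ P₁ P₂ : H →L[ℂ] H)
    (h₀2 : P₀.comp P₀ = P₀) (h₀sa : ∀ x y : H, (inner ℂ (P₀ x) y : ℂ) = inner ℂ x (P₀ y))
    (h₁2 : P₁.comp P₁ = P₁) (h₁sa : ∀ x y : H, (inner ℂ (P₁ x) y : ℂ) = inner ℂ x (P₁ y))
    (h₂2 : P₂.comp P₂ = P₂) (h₂sa : ∀ x y : H, (inner ℂ (P₂ x) y : ℂ) = inner ℂ x (P₂ y))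
    (h01 : Pap.IsTraceClass (P₀ - P₁)) (h12 : Pap.IsTraceClass (P₁ - P₂))
    (h02 : Pap.IsTraceClass (P₀ - P₂))
    (T₁' : (LinearMap.range (P₁ : H →ₗ[ℂ] H)) →L[ℂ] (LinearMap.range (P₀ : H →ₗ[ℂ] H)))
    (hT₁'l : T₁'.comp (Pap.toeplitz P₀ P₁) = ContinuousLinearMap.id ℂ _)
    (hT₁'r : (Pap.toeplitz P₀ P₁).comp T₁' = ContinuousLinearMap.id ℂ _)
    (T₂' : (LinearMap.range (P₂ : H →ₗ[ℂ] H)) →L[ℂ] (LinearMap.range (P₁ : H →ₗ[ℂ] H)))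
    (hT₂'l : T₂'.comp (Pap.toeplitz P₁ P₂) = ContinuousLinearMap.id ℂ _)
    (hT₂'r : (Pap.toeplitz P₁ P₂).comp T₂' = ContinuousLinearMap.id ℂ _)
    (T' : (LinearMap.range (P₂ : H →ₗ[ℂ] H)) →L[ℂ] (LinearMap.range (P₀ : H →ₗ[ℂ] H)))
    (hT'l : T'.comp (Pap.toeplitz P₀ P₂) = ContinuousLinearMap.id ℂ _)
    (hT'r : (Pap.toeplitz P₀ P₂).comp T' = ContinuousLinearMap.id ℂ _)
    (R₀ : (LinearMap.range (P₀ : H →ₗ[ℂ] H)) →L[ℂ] (LinearMap.range (P₀ : H →ₗ[ℂ] H)))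
    (R₂ : (LinearMap.range (P₂ : H →ₗ[ℂ] H)) →L[ℂ] (LinearMap.range (P₂ : H →ₗ[ℂ] H)))
    (hpert : Pap.IsTraceClass
      (Pap.toeplitz P₀ P₂ - (Pap.toeplitz P₁ P₂).comp (Pap.toeplitz P₀ P₁)))
    (hpertInv : Pap.IsTraceClass (T' - T₁'.comp T₂'))
    (htc₁ : Pap.IsTraceClass (T'.comp (R₂.comp (Pap.toeplitz P₀ P₂)) - R₀))
    (htc₂ : Pap.IsTraceClass ((T₁'.comp T₂').comp
      (R₂.comp ((Pap.toeplitz P₁ P₂).comp (Pap.toeplitz P₀ P₁))) - R₀)) :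
    Pap.trace (T'.comp (R₂.comp (Pap.toeplitz P₀ P₂)) - R₀) =
      Pap.trace ((T₁'.comp T₂').comp
        (R₂.comp ((Pap.toeplitz P₁ P₂).comp (Pap.toeplitz P₀ P₁))) - R₀) := by
  haveI i0 : CompleteSpace (LinearMap.range (P₀ : H →ₗ[ℂ] H)) := Pap.completeSpace_range P₀ h₀2
  haveI i1 : CompleteSpace (LinearMap.range (P₁ : H →ₗ[ℂ] H)) := Pap.completeSpace_range P₁ h₁2
  haveI i2 : CompleteSpace (LinearMap.range (P₂ : H →ₗ[ℂ] H)) := Pap.completeSpace_range P₂ h₂2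
  set T := Pap.toeplitz P₀ P₂ with hT
  set Tc := (Pap.toeplitz P₁ P₂).comp (Pap.toeplitz P₀ P₁) with hTc
  set Si := T₁'.comp T₂' with hSi
  set A := T'.comp (R₂.comp T) - R₀ with hA
  set B := Si.comp (R₂.comp Tc) - R₀ with hB
  have pT : ∀ x, T (T' x) = x := fun x => by
    have := DFunLike.congr_fun hT'r x; simpa using this
  have pTcSi : ∀ x, Tc (Si x) = x := fun x => by
    have e1 := DFunLike.congr_fun hT₁'r (T₂' x)
    have e2 := DFunLike.congr_fun hT₂'r x
    simp only [ContinuousLinearMap.comp_apply, ContinuousLinearMap.id_apply] at e1 e2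
    simp only [hTc, hSi, ContinuousLinearMap.comp_apply]
    rw [e1, e2]
  have c1 := Pap.trace_comp_comm (T'.comp R₂) hpert
  have c2 := Pap.trace_comp_comm (R₂.comp Tc) hpertInv
  have hD : A - B = (T'.comp R₂).comp (T - Tc) + (T' - Si).comp (R₂.comp Tc) := by
    ext x
    simp only [hA, hB, ContinuousLinearMap.sub_apply, ContinuousLinearMap.add_apply,
      ContinuousLinearMap.comp_apply, map_sub]
    abel
  set L := (Tc - T).comp T' with hL
  have hTcT : Pap.IsTraceClass (Tc - T) := by
    rw [← neg_sub]; exact Pap.IsTraceClass.neg' hpert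
  have cL := Pap.trace_comp_comm T' hTcT
  have hLtc : Pap.IsTraceClass L := cL.2.1
  have cRL := Pap.trace_comp_comm R₂ hLtc
  have hid : (T - Tc).comp (T'.comp R₂) + (R₂.comp Tc).comp (T' - Si)
      = R₂.comp L - L.comp R₂ := by
    ext x
    simp only [ContinuousLinearMap.add_apply, ContinuousLinearMap.sub_apply,
      ContinuousLinearMap.comp_apply, map_sub, hL, pT, pTcSi]
    abel
  have hsum2 := Pap.IsTraceClass.add_trace c1.2.1 c2.1
  have hsub := Pap.IsTraceClass.sub_trace cRL.1 cRL.2.1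
  have htrace_sum_zero : Pap.trace ((T - Tc).comp (T'.comp R₂)
      + (R₂.comp Tc).comp (T' - Si)) = 0 := by
    rw [hid, hsub.2, cRL.2.2]
    ring
  have hDtc_add := Pap.IsTraceClass.add_trace c1.1 c2.2.1
  have hABtc : Pap.IsTraceClass (A - B) := by rw [hD]; exact hDtc_add.1
  have htraceD : Pap.trace (A - B) = 0 := by
    rw [hD, hDtc_add.2, c1.2.2, ← c2.2.2, ← hsum2.2, htrace_sum_zero]
  have hfin := Pap.IsTraceClass.add_trace htc₂ hABtc
  have hBA : B + (A - B) = A := by abel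
  rw [hBA] at hfin
  rw [hfin.2, htraceD, add_zero]
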